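/- Let R ⊆ S be a ring extension and suppose MSupp(S/R) := Supp_R(S/R) ∩ Max(R) is finite. If the localization R_M ⊆ S_M is module-finite for each M ∈ MSupp(S/R), then R ⊆ S is module-finite. -/

import Mathlib

/-- If `MSupp(S/R) := Supp_R(S/R) ∩ Max(R)` is finite and `R_M ⊆ S_M` is module-finite
for each `M ∈ MSupp(S/R)`, then `R ⊆ S` is module-finite. -/
theorem finite_of_locally_finite_on_msupp
    (R S : Type*) [CommRing R] [CommRing S] [Algebra R S]
    (hinj : Function.Injective (algebraMap R S))
    (hfin : {M : Ideal R | ∃ hM : M.IsMaximal,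
      Nontrivial (LocalizedModule (M.primeCompl (hp := hM.isPrime))
        (S ⧸ LinearMap.range (Algebra.linearMap R S)))}.Finite)
    (hloc : ∀ (M : Ideal R) (hM : M.IsMaximal),
      Nontrivial (LocalizedModule (M.primeCompl (hp := hM.isPrime))
        (S ⧸ LinearMap.range (Algebra.linearMap R S))) →
      Module.Finite (Localization (M.primeCompl (hp := hM.isPrime)))
        (LocalizedModule (M.primeCompl (hp := hM.isPrime)) S)) :
    Module.Finite R S := by
  classical
  set Q := S ⧸ LinearMap.range (Algebra.linearMap R S) with hQ
  -- extract finite generating sets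
  have key : ∀ M : Ideal R, ∃ F : Finset S, ∀ (hM : M.IsMaximal),
      Nontrivial (LocalizedModule (M.primeCompl (hp := hM.isPrime)) Q) →
      Submodule.span (Localization (M.primeCompl (hp := hM.isPrime)))
        ((fun s : S => LocalizedModule.mk s (1 : (M.primeCompl (hp := hM.isPrime)))) '' (F : Set S)) = ⊤ := by
    intro M
    by_cases h : ∃ hM : M.IsMaximal,
        Nontrivial (LocalizedModule (M.primeCompl (hp := hM.isPrime)) Q)
    · obtain ⟨hM, hnt⟩ := h
      haveI := hM.isPrime
      obtain ⟨G, hG⟩ := (hloc M hM hnt).fg_top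
      have surj : ∀ x : LocalizedModule M.primeCompl S, ∃ p : S × M.primeCompl,
          LocalizedModule.mk p.1 p.2 = x := fun x =>
        LocalizedModule.induction_on (fun m t => ⟨(m, t), rfl⟩) x
      choose σ hσ using surj
      refine ⟨G.image (fun g => (σ g).1), fun hM' hnt' => ?_⟩
      rw [eq_top_iff, ← hG, Submodule.span_le]
      intro g hg
      have hrep : g = IsLocalization.mk' (Localization M.primeCompl) (1 : R) (σ g).2 •
          LocalizedModule.mk (σ g).1 (1 : M.primeCompl) := by
        conv_lhs => rw [← hσ g]
        simp only [IsLocalizedModule.mk_eq_mk']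
        rw [IsLocalizedModule.mk'_smul_mk', one_smul, mul_one]
      rw [hrep]
      refine Submodule.smul_mem _ _ (Submodule.subset_span ?_)
      exact ⟨(σ g).1, by simpa using Finset.mem_image_of_mem _ hg, rfl⟩
    · exact ⟨∅, fun hM hnt => absurd ⟨hM, hnt⟩ h⟩
  choose F hF using key
  set MS := {M : Ideal R | ∃ hM : M.IsMaximal,
      Nontrivial (LocalizedModule (M.primeCompl (hp := hM.isPrime)) Q)} with hMS
  set gens : Set S := {1} ∪ ⋃ M ∈ MS, (F M : Set S) with hgens
  have hgfin : gens.Finite :=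
    (Set.finite_singleton 1).union (hfin.biUnion fun M _ => (F M).finite_toSet)
  have htop : Submodule.span R gens = ⊤ := by
    apply Submodule.eq_top_of_localization₀_maximal
      (fun P _ => LocalizedModule P.primeCompl S)
      (fun P _ => LocalizedModule.mkLinearMap P.primeCompl S)
    intro P hP
    by_cases hnt : Nontrivial (LocalizedModule P.primeCompl Q)
    · have h1 := hF P hP hnt
      have hsub : (fun s : S => LocalizedModule.mk s (1 : P.primeCompl)) '' ((F P : Set S)) ⊆
          ((Submodule.span R gens).localized' (Localization P.primeCompl) P.primeCompl
            (LocalizedModule.mkLinearMap P.primeCompl S) : Set (LocalizedModule P.primeCompl S)) := by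
        rintro _ ⟨s, hs, rfl⟩
        exact ⟨s, Submodule.subset_span (Or.inr (Set.mem_biUnion ⟨hP, hnt⟩ hs)), 1,
          (IsLocalizedModule.mk_eq_mk' 1 s).symm⟩
      have h2 : (Submodule.span R gens).localized' (Localization P.primeCompl) P.primeCompl
          (LocalizedModule.mkLinearMap P.primeCompl S) = ⊤ := by
        rw [eq_top_iff, ← h1]
        exact Submodule.span_le.mpr hsub
      rw [← Submodule.restrictScalars_localized' (Localization P.primeCompl), h2,
        Submodule.restrictScalars_top]
    · have hsg : Subsingleton (LocalizedModule P.primeCompl Q) :=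
        not_nontrivial_iff_subsingleton.mp hnt
      rw [eq_top_iff]
      rintro x -
      induction x using LocalizedModule.induction_on with
      | h s t =>
        have h0 : LocalizedModule.mk (Submodule.Quotient.mk s : Q) (1 : P.primeCompl) = 0 :=
          Subsingleton.elim _ _
        rw [IsLocalizedModule.mk_eq_mk'] at h0
        obtain ⟨u, hu⟩ := (IsLocalizedModule.mk'_eq_zero' _ _).mp h0
        rw [Submonoid.smul_def, ← Submodule.Quotient.mk_smul,
          Submodule.Quotient.mk_eq_zero] at hu
        obtain ⟨r, hr⟩ := hu
        refine ⟨(u : R) • s, ?_, u * t, ?_⟩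
        · rw [← hr, Algebra.linearMap_apply, Algebra.algebraMap_eq_smul_one]
          exact Submodule.smul_mem _ r (Submodule.subset_span (Or.inl rfl))
        · rw [← IsLocalizedModule.mk_eq_mk']
          exact LocalizedModule.mk_eq.mpr ⟨1, by
            simp [Submonoid.smul_def, smul_smul, mul_comm, mul_left_comm]⟩
  exact ⟨htop ▸ Submodule.fg_span hgfin⟩
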